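/- arXiv:1305.1245 — 3 statements merged into one kernel-verified Lean document; each statement's English description precedes it below -/
import Mathlib

section
/- If γ has Conley-Zehnder index iteration of the form μ(γ^k) = k·r + Σ_{i=1}^{j} 2⌊kθ_i⌋ + j with r an integer, j ∈ {0,…,n-1}, θ_i ∈ (0,1) irrational, and μ(γ^1) = r + j ≥ n - 1, then r ≥ 0 and consequently the index is nondecreasing under iteration: μ(γ^k) ≤ μ(γ^{k+1}) for all k ∈ ℕ. -/
theorem stmt_0 (n : ℕ) (hn : 1 ≤ n) (r : ℤ) (j : ℕ) (hj : (j : ℤ) ≤ (n : ℤ) - 1)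
    (θ : Fin j → ℝ) (hirr : ∀ i, Irrational (θ i))
    (hθ : ∀ i, 0 < θ i ∧ θ i < 1)
    (μ : ℕ → ℤ)
    (hμ : ∀ k : ℕ, μ k = (k : ℤ) * r + (∑ i, 2 * ⌊(k : ℝ) * θ i⌋) + (j : ℤ))
    (h1 : (n : ℤ) - 1 ≤ r + (j : ℤ)) :
    0 ≤ r ∧ ∀ k : ℕ, 1 ≤ k → μ k ≤ μ (k + 1) := by
  have hr : 0 ≤ r := by linarith
  refine ⟨hr, fun k hk => ?_⟩
  rw [hμ k, hμ (k + 1)]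
  push_cast
  have hsum : (∑ i, 2 * ⌊(k : ℝ) * θ i⌋) ≤ ∑ i, 2 * ⌊((k : ℝ) + 1) * θ i⌋ := by
    apply Finset.sum_le_sum
    intro i _
    have h := (hθ i).1
    have : (k : ℝ) * θ i ≤ ((k : ℝ) + 1) * θ i := by nlinarith
    exact mul_le_mul_of_nonneg_left (Int.floor_le_floor this) (by norm_num)
  nlinarith [hsum]
end

section
/- If μ(k) = k·r + Σ_{i=1}^{j} 2⌊kθ_i⌋ + j with 1 ≤ j ≤ n-1, θ_i ∈ (0,1) irrational, and μ(1) = r + j = n + 1, then μ(k) + 2 ≤ μ(k+1) for all k ∈ ℕ, and moreover there exists k₀ ∈ ℕ with μ(k₀) + 2 < μ(k₀+1). -/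
theorem stmt_1 (n : ℕ) (hn : 2 ≤ n) (r : ℤ) (j : ℕ) (hj1 : 1 ≤ j)
    (hj : (j : ℤ) ≤ (n : ℤ) - 1)
    (θ : Fin j → ℝ) (hirr : ∀ i, Irrational (θ i))
    (hθ : ∀ i, 0 < θ i ∧ θ i < 1)
    (μ : ℕ → ℤ)
    (hμ : ∀ k : ℕ, μ k = (k : ℤ) * r + (∑ i, 2 * ⌊(k : ℝ) * θ i⌋) + (j : ℤ))
    (h1 : r + (j : ℤ) = (n : ℤ) + 1) :
    (∀ k : ℕ, 1 ≤ k → μ k + 2 ≤ μ (k + 1)) ∧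
      ∃ k₀ : ℕ, 1 ≤ k₀ ∧ μ k₀ + 2 < μ (k₀ + 1) := by
  classical
  have hr : (2:ℤ) ≤ r := by linarith
  have hmono : ∀ (k : ℕ) (i : Fin j), ⌊(k : ℝ) * θ i⌋ ≤ ⌊((k+1 : ℕ) : ℝ) * θ i⌋ := by
    intro k i
    apply Int.floor_le_floor
    push_cast
    nlinarith [(hθ i).1]
  constructor
  · intro k _
    rw [hμ k, hμ (k+1)]
    have hsum : (∑ i, 2 * ⌊(k : ℝ) * θ i⌋) ≤ ∑ i, 2 * ⌊((k+1 : ℕ) : ℝ) * θ i⌋ :=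
      Finset.sum_le_sum (fun i _ => by have := hmono k i; linarith)
    push_cast at hsum ⊢
    linarith
  · set i0 : Fin j := ⟨0, hj1⟩
    set t := θ i0 with ht
    have ht0 := (hθ i0).1
    have ht1 := (hθ i0).2
    obtain ⟨N, hN⟩ := exists_nat_gt (1 / t)
    have hP : ∃ m : ℕ, 1 ≤ ⌊(m:ℝ) * t⌋ := by
      refine ⟨N, ?_⟩
      rw [Int.le_floor]
      rw [div_lt_iff₀ ht0] at hN
      push_cast
      linarith
    set m := Nat.find hP with hmdef
    have hm : 1 ≤ ⌊(m:ℝ) * t⌋ := Nat.find_spec hP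
    have hm0 : m ≠ 0 := by
      intro h
      rw [h] at hm
      norm_num at hm
    have hm1 : m ≠ 1 := by
      intro h
      rw [h] at hm
      have h0 : ⌊((1:ℕ):ℝ) * t⌋ = 0 := by
        apply Int.floor_eq_zero_iff.mpr
        simp only [Set.mem_Ico]
        push_cast
        constructor <;> linarith
      omega
    refine ⟨m - 1, by omega, ?_⟩
    have hm1' : m - 1 + 1 = m := by omega
    have hprev : ⌊((m-1 : ℕ):ℝ) * t⌋ ≤ 0 := by
      have := Nat.find_min hP (show m - 1 < m by omega)
      omega
    have hstep : ⌊((m-1 : ℕ):ℝ) * t⌋ < ⌊((m-1+1 : ℕ):ℝ) * t⌋ := by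
      rw [hm1']
      omega
    rw [hμ (m-1), hμ (m-1+1)]
    have hsum : (∑ i, 2 * ⌊((m-1 : ℕ) : ℝ) * θ i⌋) < ∑ i, 2 * ⌊((m-1+1 : ℕ) : ℝ) * θ i⌋ := by
      apply Finset.sum_lt_sum (fun i _ => by have := hmono (m-1) i; linarith)
      exact ⟨i0, Finset.mem_univ _, by rw [← ht]; linarith⟩
    push_cast at hsum ⊢
    linarith
end

section
/- Let θ₁,…,θ_{n-1} ∈ (0,1) be irrational and set μ(k) = Σ_{i=1}^{n-1} 2⌊kθ_i⌋ + n - 1. Let β be a positive integer. It is impossible that μ(βi + 1) = μ(βi + 2) for all i ∈ ℕ. In particular, there exists i* such that Σ_{i=1}^{n-1} ⌊(βi*+2)θ_i⌋ ≥ Σ_{i=1}^{n-1} ⌊(βi*+1)θ_i⌋ + 1. -/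
open Set

private lemma key_exists (θ₀ : ℝ) (hirr : Irrational θ₀) (h0 : 0 < θ₀) (h1 : θ₀ < 1)
    (β : ℕ) (hβ : 1 ≤ β) :
    ∃ J : ℕ, 1 ≤ J ∧ ∃ c : ℤ,
      ((β * J + 1 : ℕ) : ℝ) * θ₀ < c ∧ (c : ℝ) ≤ ((β * J + 1 : ℕ) : ℝ) * θ₀ + θ₀ := by
  set α : ℝ := (β : ℝ) * θ₀ with hα
  have hαirr : Irrational α := hirr.natCast_mul (by omega)
  set S : AddSubgroup ℝ := AddSubgroup.closure {α, 1} with hS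
  have hdense : Dense (S : Set ℝ) := by
    rcases S.dense_or_cyclic with h | ⟨a, ha⟩
    · exact h
    · exfalso
      have hmα : α ∈ S := AddSubgroup.subset_closure (by simp)
      have hm1 : (1 : ℝ) ∈ S := AddSubgroup.subset_closure (by simp)
      rw [ha, AddSubgroup.mem_closure_singleton] at hmα hm1
      obtain ⟨k, hk⟩ := hmα
      obtain ⟨m, hm⟩ := hm1
      have hk' : (k : ℝ) * a = α := by simpa [zsmul_eq_mul] using hk
      have hm' : (m : ℝ) * a = 1 := by simpa [zsmul_eq_mul] using hm
      have hm0 : (m : ℝ) ≠ 0 := by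
        intro h; rw [h, zero_mul] at hm'; norm_num at hm'
      exact hαirr ⟨(k : ℚ) / (m : ℚ), by
        push_cast
        rw [div_eq_iff hm0]
        linear_combination (m : ℝ) * hk' - (k : ℝ) * hm'⟩
  obtain ⟨g, hgS, hg0, hgε⟩ := hdense.exists_between h0
  rw [SetLike.mem_coe, AddSubgroup.mem_closure_pair] at hgS
  obtain ⟨j, m, hjm⟩ := hgS
  have hjm' : (j : ℝ) * α + (m : ℝ) = g := by
    simpa [zsmul_eq_mul] using hjm
  rcases lt_trichotomy j 0 with hj | hj | hj
  · -- decreasing case: d • α = m - g with d = -j > 0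
    set d : ℕ := (-j).toNat with hd
    have hd1 : 1 ≤ d := by omega
    have hdα : (d : ℝ) * α = (m : ℝ) - g := by
      have : ((d : ℤ) : ℝ) = -(j : ℝ) := by
        have : (d : ℤ) = -j := by omega
        rw [this]; push_cast; ring
      push_cast at this ⊢
      linear_combination α * this - hjm'
    have hex : ∃ k : ℕ, θ₀ - (k : ℝ) * g < 0 := by
      obtain ⟨k, hk⟩ := exists_nat_gt (θ₀ / g)
      exact ⟨k, by rw [div_lt_iff₀ hg0] at hk; nlinarith⟩
    set k := Nat.find hex with hkdef
    have hk : θ₀ - (k : ℝ) * g < 0 := Nat.find_spec hex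
    have hk1 : 1 ≤ k := by
      rcases Nat.eq_zero_or_pos k with h | h
      · exfalso; rw [h] at hk; simp at hk; linarith
      · exact h
    have hkprev : 0 ≤ θ₀ - ((k - 1 : ℕ) : ℝ) * g := by
      by_contra hcon
      exact absurd (Nat.find_min' hex (m := k - 1) (not_le.mp hcon)) (by omega)
    have hkg : θ₀ - (k : ℝ) * g > -θ₀ := by
      have : ((k - 1 : ℕ) : ℝ) = (k : ℝ) - 1 := by
        have : (1:ℕ) ≤ k := hk1; push_cast [Nat.cast_sub this]; ring
      rw [this] at hkprev; nlinarith
    refine ⟨k * d, Nat.mul_pos hk1 hd1, k * m, ?_, ?_⟩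
    · -- (β(kd)+1)θ₀ = θ₀ + k*(dα) = θ₀ - kg + km < km
      have : ((β * (k * d) + 1 : ℕ) : ℝ) * θ₀ = θ₀ + (k : ℝ) * ((d:ℝ) * α) := by
        push_cast [hα]; ring
      rw [this, hdα]; push_cast; nlinarith
    · have : ((β * (k * d) + 1 : ℕ) : ℝ) * θ₀ = θ₀ + (k : ℝ) * ((d:ℝ) * α) := by
        push_cast [hα]; ring
      rw [this, hdα]; push_cast; nlinarith
  · -- j = 0 : g is an integer in (0,1), impossible
    exfalso
    subst hj
    simp at hjm'
    have : 0 < m := by exact_mod_cast hjm' ▸ hg0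
    have : (1 : ℝ) ≤ m := by exact_mod_cast this
    rw [hjm'] at this; linarith
  · -- increasing case: d • α = g - m with d = j > 0
    set d : ℕ := j.toNat with hd
    have hd1 : 1 ≤ d := by omega
    have hdα : (d : ℝ) * α = g - (m : ℝ) := by
      have hdj : ((d : ℤ) : ℝ) = (j : ℝ) := by
        have : (d : ℤ) = j := by omega
        rw [this]
      push_cast at hdj ⊢
      linear_combination α * hdj + hjm'
    have hex : ∃ k : ℕ, 2 - θ₀ < θ₀ + (k : ℝ) * g := by
      obtain ⟨k, hk⟩ := exists_nat_gt ((2 - 2*θ₀) / g)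
      exact ⟨k, by rw [div_lt_iff₀ hg0] at hk; nlinarith⟩
    set k := Nat.find hex with hkdef
    have hk : 2 - θ₀ < θ₀ + (k : ℝ) * g := Nat.find_spec hex
    have hk1 : 1 ≤ k := by
      rcases Nat.eq_zero_or_pos k with h | h
      · exfalso; rw [h] at hk; simp at hk; linarith
      · exact h
    have hkprev : θ₀ + ((k - 1 : ℕ) : ℝ) * g ≤ 2 - θ₀ := by
      by_contra hcon
      exact absurd (Nat.find_min' hex (m := k - 1) (not_le.mp hcon)) (by omega)
    have hkg : θ₀ + (k : ℝ) * g < 2 := by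
      have : ((k - 1 : ℕ) : ℝ) = (k : ℝ) - 1 := by
        have : (1:ℕ) ≤ k := hk1; push_cast [Nat.cast_sub this]; ring
      rw [this] at hkprev; nlinarith
    refine ⟨k * d, Nat.mul_pos hk1 hd1, 2 - k * m, ?_, ?_⟩
    · have : ((β * (k * d) + 1 : ℕ) : ℝ) * θ₀ = θ₀ + (k : ℝ) * ((d:ℝ) * α) := by
        push_cast [hα]; ring
      rw [this, hdα]; push_cast; nlinarith
    · have : ((β * (k * d) + 1 : ℕ) : ℝ) * θ₀ = θ₀ + (k : ℝ) * ((d:ℝ) * α) := by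
        push_cast [hα]; ring
      rw [this, hdα]; push_cast; nlinarith

theorem stmt_18 (n : ℕ) (hn : 2 ≤ n)
    (θ : Fin (n - 1) → ℝ) (hirr : ∀ i, Irrational (θ i))
    (hθ : ∀ i, 0 < θ i ∧ θ i < 1)
    (β : ℕ) (hβ : 1 ≤ β)
    (μ : ℕ → ℤ)
    (hμ : ∀ k : ℕ, μ k = (∑ i, 2 * ⌊(k : ℝ) * θ i⌋) + (n : ℤ) - 1) :
    (¬ ∀ i : ℕ, 1 ≤ i → μ (β * i + 1) = μ (β * i + 2)) ∧
      ∃ i : ℕ, 1 ≤ i ∧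
        (∑ t, ⌊((β * i + 1 : ℕ) : ℝ) * θ t⌋) + 1 ≤ ∑ t, ⌊((β * i + 2 : ℕ) : ℝ) * θ t⌋ := by
  have i₀ : Fin (n - 1) := ⟨0, by omega⟩
  obtain ⟨J, hJ1, c, hc1, hc2⟩ :=
    key_exists (θ i₀) (hirr i₀) (hθ i₀).1 (hθ i₀).2 β hβ
  have hmono : ∀ t, ⌊((β * J + 1 : ℕ) : ℝ) * θ t⌋ ≤ ⌊((β * J + 2 : ℕ) : ℝ) * θ t⌋ := by
    intro t
    apply Int.floor_le_floor
    have := (hθ t).1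
    push_cast
    nlinarith
  have hstrict : ⌊((β * J + 1 : ℕ) : ℝ) * θ i₀⌋ < ⌊((β * J + 2 : ℕ) : ℝ) * θ i₀⌋ := by
    have h1 : ⌊((β * J + 1 : ℕ) : ℝ) * θ i₀⌋ < c := Int.floor_lt.mpr hc1
    have h2 : c ≤ ⌊((β * J + 2 : ℕ) : ℝ) * θ i₀⌋ := by
      apply Int.le_floor.mpr
      have : ((β * J + 2 : ℕ) : ℝ) * θ i₀ = ((β * J + 1 : ℕ) : ℝ) * θ i₀ + θ i₀ := by
        push_cast; ring
      rw [this]; exact hc2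
    omega
  have hsum : (∑ t, ⌊((β * J + 1 : ℕ) : ℝ) * θ t⌋) < ∑ t, ⌊((β * J + 2 : ℕ) : ℝ) * θ t⌋ :=
    Finset.sum_lt_sum (fun t _ => hmono t) ⟨i₀, Finset.mem_univ _, hstrict⟩
  refine ⟨?_, J, hJ1, by omega⟩
  intro h
  have heq := h J hJ1
  rw [hμ, hμ] at heq
  have h2 : (∑ t, 2 * ⌊((β * J + 1 : ℕ) : ℝ) * θ t⌋) < ∑ t, 2 * ⌊((β * J + 2 : ℕ) : ℝ) * θ t⌋ := by
    simp only [← Finset.mul_sum]; omega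
  push_cast at heq h2
  omega
end
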